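/- arXiv:1509.08325 — 2 statements merged into one kernel-verified Lean document; each statement's English description precedes it below -/
import Mathlib

section
/- Let B ⊆ A × A × A be a basic set whose entropy limit exists and is positive, say ln(ln c_n)/n → h with h > 0. If the periodic boundary entropy coincides with h, i.e., ln(ln |B_n^P|)/n → h as n → ∞, then there exists i ∈ {1,2} such that both (1,i,i) ∈ B and (2,i,i) ∈ B. -/
open Filter Real

/-- The set of `n`-blocks of the binary Markov tree-shift over the alphabet `Fin 2`
(symbols `0,1` standing for `1,2`) with basic set `B` of 2-blocks `(i,j,k)`:
labelings of the binary words of length `< n` such that every node `v` of length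
`≤ n-2`, together with its children `v0` and `v1`, forms a pattern in `B`. -/
def Block2 (B : Finset (Fin 2 × Fin 2 × Fin 2)) (n : ℕ) :
    Set ({w : List (Fin 2) // w.length < n} → Fin 2) :=
  {u | ∀ (v : List (Fin 2)) (h : v.length + 2 ≤ n),
    (u ⟨v, by omega⟩,
     u ⟨v ++ [0], by simp; omega⟩,
     u ⟨v ++ [1], by simp; omega⟩) ∈ B}

/-- The `n`-blocks whose root is labeled `i`. -/
def BlockRoot2 (B : Finset (Fin 2 × Fin 2 × Fin 2)) (i : Fin 2) (n : ℕ) :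
    Set ({w : List (Fin 2) // w.length < n} → Fin 2) :=
  {u | u ∈ Block2 B n ∧ ∀ h : 0 < n, u ⟨[], by simpa using h⟩ = i}

/-- `n`-blocks satisfying the Neumann boundary condition: every node of length `n-1`
(written `w ++ [j]` with `|w| = n-2`) carries the same label as its parent `w`. -/
def BlockN (B : Finset (Fin 2 × Fin 2 × Fin 2)) (n : ℕ) :
    Set ({w : List (Fin 2) // w.length < n} → Fin 2) :=
  {u | u ∈ Block2 B n ∧ ∀ (w : List (Fin 2)) (j : Fin 2) (h : w.length + 2 = n),
    u ⟨w ++ [j], by simp; omega⟩ = u ⟨w, by omega⟩}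

/-- `n`-blocks satisfying the Dirichlet boundary condition with value `i`: every node
of length `n-1` is labeled `i`. -/
def BlockD (B : Finset (Fin 2 × Fin 2 × Fin 2)) (i : Fin 2) (n : ℕ) :
    Set ({w : List (Fin 2) // w.length < n} → Fin 2) :=
  {u | u ∈ Block2 B n ∧ ∀ (w : List (Fin 2)) (h : w.length + 1 = n),
    u ⟨w, by omega⟩ = i}

/-- `n`-blocks satisfying the periodic boundary condition: every node of length `n-1`
carries the same label as the root. -/
def BlockP (B : Finset (Fin 2 × Fin 2 × Fin 2)) (n : ℕ) :
    Set ({w : List (Fin 2) // w.length < n} → Fin 2) :=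
  {u | u ∈ Block2 B n ∧ ∀ (w : List (Fin 2)) (h : w.length + 1 = n),
    u ⟨w, by omega⟩ = u ⟨[], by simp; omega⟩}

set_option maxHeartbeats 4000000 in
/-- Suppose the entropy limit of the binary Markov tree-shift `X^B` exists and is
positive, say equal to `h`. If the periodic boundary entropy also equals `h`, then
`(1,i,i), (2,i,i) ∈ B` for some symbol `i`. (Symbols `1,2` are `0,1 : Fin 2`.) -/
theorem periodic_entropy_eq_necessary (B : Finset (Fin 2 × Fin 2 × Fin 2)) (h : ℝ)
    (hpos : 0 < h)
    (hent : Tendsto (fun n : ℕ => Real.log (Real.log (Nat.card (Block2 B n))) / n)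
      atTop (nhds h))
    (hP : Tendsto (fun n : ℕ => Real.log (Real.log (Nat.card (BlockP B n))) / n)
      atTop (nhds h)) :
    ∃ i : Fin 2, ((0 : Fin 2), i, i) ∈ B ∧ ((1 : Fin 2), i, i) ∈ B := by
  by_contra hcon
  push_neg at hcon
  have hcon' : ∀ i : Fin 2, ¬(((0 : Fin 2), i, i) ∈ B ∧ ((1 : Fin 2), i, i) ∈ B) := by
    intro i ⟨h1, h2⟩; exact hcon i h1 h2
  -- If two symbols can both sit above a doubled label, we get a contradiction
  have endgame : ∀ a b c : Fin 2, (a, c, c) ∈ B → (b, c, c) ∈ B → a = b := by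
    intro a b c ha hb
    by_contra hne
    apply hcon' c
    constructor <;> (fin_cases a <;> fin_cases b <;> simp_all)
  -- Key: any two periodic blocks with equal root labels agree everywhere (levelwise)
  have key : ∀ (n k : ℕ) (u u' : {w : List (Fin 2) // w.length < n} → Fin 2),
      u ∈ BlockP B n → u' ∈ BlockP B n →
      (∀ h0 : ([] : List (Fin 2)).length < n, u ⟨[], h0⟩ = u' ⟨[], h0⟩) →
      ∀ (w w' : List (Fin 2)) (hw : w.length + (k + 1) = n)
        (hw' : w'.length + (k + 1) = n),
        u ⟨w, by omega⟩ = u' ⟨w', by omega⟩ := by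
    intro n k
    induction k with
    | zero =>
      intro u u' hu hu' hr w w' hw hw'
      have h1 := hu.2 w hw
      have h2 := hu'.2 w' hw'
      rw [h1, h2]
      exact hr _
    | succ k ih =>
      intro u u' hu hu' hr w w' hw hw'
      have e1 : (w ++ [(0 : Fin 2)]).length + (k + 1) = n := by simp; omega
      have e2 : (w ++ [(1 : Fin 2)]).length + (k + 1) = n := by simp; omega
      have e3 : (w' ++ [(0 : Fin 2)]).length + (k + 1) = n := by simp; omega
      have e4 : (w' ++ [(1 : Fin 2)]).length + (k + 1) = n := by simp; omega
      have c11 := ih u u' hu hu' hr (w ++ [1]) (w' ++ [1]) e2 e4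
      have cu := ih u u hu hu (fun _ => rfl) (w ++ [0]) (w ++ [1]) e1 e2
      have cu' := ih u' u' hu' hu' (fun _ => rfl) (w' ++ [0]) (w' ++ [1]) e3 e4
      have hB1 := hu.1 w (by omega)
      have hB2 := hu'.1 w' (by omega)
      simp only [cu, c11] at hB1
      simp only [cu'] at hB2
      exact endgame _ _ _ hB1 hB2
  -- Hence the number of periodic blocks is at most 2
  have hcard : ∀ n : ℕ, 1 ≤ n → Nat.card (BlockP B n) ≤ 2 := by
    intro n hn
    have hroot : ([] : List (Fin 2)).length < n := by simp; omega
    have hinj : Function.Injective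
        (fun u : (BlockP B n) => u.1 ⟨[], hroot⟩) := by
      intro u u' he
      apply Subtype.ext; funext x
      obtain ⟨w, hwlt⟩ := x
      have hw : w.length + ((n - 1 - w.length) + 1) = n := by omega
      exact key n (n - 1 - w.length) u.1 u'.1 u.2 u'.2 (fun _ => he) w w hw hw
    calc Nat.card (BlockP B n) ≤ Nat.card (Fin 2) :=
          Nat.card_le_card_of_injective _ hinj
      _ = 2 := by simp
  -- Therefore the periodic entropy is ≤ 0
  have hle : ∀ n : ℕ, 1 ≤ n →
      Real.log (Real.log (Nat.card (BlockP B n))) / n ≤ 0 := by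
    intro n hn
    have hden : (0 : ℝ) ≤ n := by positivity
    have hnum : Real.log (Real.log (Nat.card (BlockP B n))) ≤ 0 := by
      have h2 := hcard n hn
      have hm : Nat.card (BlockP B n) = 0 ∨ Nat.card (BlockP B n) = 1 ∨
          Nat.card (BlockP B n) = 2 := by omega
      rcases hm with hm | hm | hm <;> rw [hm]
      · norm_num
      · norm_num
      · have hlt : Real.log 2 ≤ 1 :=
          le_of_lt (lt_trans Real.log_two_lt_d9 (by norm_num))
        push_cast
        exact Real.log_nonpos (Real.log_nonneg one_le_two) hlt
    exact div_nonpos_of_nonpos_of_nonneg hnum hden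
  have hfin : h ≤ 0 := le_of_tendsto hP (Filter.eventually_atTop.mpr ⟨1, hle⟩)
  linarith
end

section
/- Let (a_n)_{n≥2} and (b_n)_{n≥2} be sequences of natural numbers satisfying a_2 = 2, b_2 = 1, and for all n ≥ 3, a_n = 2·a_{n−1}·b_{n−1} and b_n = a_{n−1}². Then the sequence ln(ln a_n)/n converges to ln 2 as n → ∞, and consequently ln(ln (a_n + b_n))/n also converges to ln 2. -/
open Filter Real

private def ee : ℕ → ℕ
  | 0 => 1
  | 1 => 2
  | k+2 => 1 + ee (k+1) + 2 * ee k

private lemma ee_lb : ∀ k, 2 ^ k ≤ ee k := by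
  intro k
  induction k using Nat.strong_induction_on with
  | _ k ih =>
    match k with
    | 0 => simp [ee]
    | 1 => simp [ee]
    | k+2 =>
      have h1 := ih (k+1) (by omega)
      have h0 := ih k (by omega)
      have e1 : 2 ^ (k+2) = 2 * 2 ^ (k+1) := by ring
      have e2 : 2 ^ (k+1) = 2 * 2 ^ k := by ring
      simp only [ee]
      omega

private lemma ee_ub : ∀ k, ee k + 1 ≤ 2 ^ (k+1) := by
  intro k
  induction k using Nat.strong_induction_on with
  | _ k ih =>
    match k with
    | 0 => simp [ee]
    | 1 => simp [ee]
    | k+2 =>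
      have h1 := ih (k+1) (by omega)
      have h0 := ih k (by omega)
      have e1 : 2 ^ (k+3) = 2 * 2 ^ (k+2) := by ring
      have e2 : 2 ^ (k+2) = 2 * 2 ^ (k+1) := by ring
      simp only [ee]
      omega

private lemma ee_double : ∀ k, 2 * ee k ≤ ee (k+1) ∧ ee (k+1) ≤ 2 * ee k + 1 := by
  intro k
  induction k with
  | zero => simp [ee]
  | succ k ih =>
    have h : ee (k+1+1) = 1 + ee (k+1) + 2 * ee k := rfl
    omega

/-- If sequences of natural numbers satisfy `a 2 = 2`, `b 2 = 1`, and for `n ≥ 3`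
`a n = 2 * a (n-1) * b (n-1)` and `b n = (a (n-1))^2`, then `ln(ln a_n)/n → ln 2`,
and consequently `ln(ln (a_n + b_n))/n → ln 2` as well. -/
theorem case_four_recurrence_entropy (a b : ℕ → ℕ)
    (ha2 : a 2 = 2) (hb2 : b 2 = 1)
    (ha : ∀ n : ℕ, 3 ≤ n → a n = 2 * a (n - 1) * b (n - 1))
    (hb : ∀ n : ℕ, 3 ≤ n → b n = (a (n - 1)) ^ 2) :
    Tendsto (fun n : ℕ => Real.log (Real.log (a n)) / n) atTop (nhds (Real.log 2)) ∧
    Tendsto (fun n : ℕ => Real.log (Real.log ((a n : ℝ) + (b n : ℝ))) / n)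
      atTop (nhds (Real.log 2)) := by
  -- explicit formula for a and b
  have key : ∀ k, (a (k+2) = 2 ^ ee k ∧ b (k+3) = 2 ^ (2 * ee k)) ∧
      (a (k+3) = 2 ^ ee (k+1) ∧ b (k+4) = 2 ^ (2 * ee (k+1))) := by
    intro k
    induction k with
    | zero =>
      have hb3 : b 3 = (a 2) ^ 2 := hb 3 (by norm_num)
      have ha3 : a 3 = 2 * a 2 * b 2 := ha 3 (by norm_num)
      have hb4 : b 4 = (a 3) ^ 2 := hb 4 (by norm_num)
      refine ⟨⟨?_, ?_⟩, ?_, ?_⟩ <;> simp [ha3, hb3, hb4, ha2, hb2, ee]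
    | succ k ih =>
      obtain ⟨⟨hak, hbk⟩, hak1, hbk1⟩ := ih
      refine ⟨⟨hak1, hbk1⟩, ?_, ?_⟩
      · have h4 : a (k+4) = 2 * a (k+3) * b (k+3) := ha (k+4) (by omega)
        rw [h4, hak1, hbk]
        have : ee (k+2) = 1 + ee (k+1) + 2 * ee k := rfl
        rw [this, pow_add, pow_add]
        ring
      · have h5 : b (k+5) = (a (k+4)) ^ 2 := hb (k+5) (by omega)
        have h4 : a (k+4) = 2 * a (k+3) * b (k+3) := ha (k+4) (by omega)
        rw [h5, h4, hak1, hbk]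
        have : ee (k+2) = 1 + ee (k+1) + 2 * ee k := rfl
        rw [this]
        ring
  have han : ∀ n, 2 ≤ n → a n = 2 ^ ee (n-2) := by
    intro n hn
    have := (key (n-2)).1.1
    rwa [show n - 2 + 2 = n by omega] at this
  have hbn : ∀ n, 3 ≤ n → b n = 2 ^ (2 * ee (n-3)) := by
    intro n hn
    have := (key (n-3)).1.2
    rwa [show n - 3 + 3 = n by omega] at this
  have hlog2 : (0:ℝ) < Real.log 2 := Real.log_pos one_lt_two
  have hee_pos : ∀ k, 1 ≤ ee k := fun k => le_trans (Nat.one_le_two_pow) (ee_lb k)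
  -- log (a n) = ee (n-2) * log 2
  have logan : ∀ n, 2 ≤ n → Real.log (a n) = (ee (n-2) : ℝ) * Real.log 2 := by
    intro n hn
    rw [han n hn]
    push_cast
    rw [Real.log_pow]
  have loglogan : ∀ n, 2 ≤ n →
      Real.log (Real.log (a n)) = Real.log (ee (n-2)) + Real.log (Real.log 2) := by
    intro n hn
    rw [logan n hn, Real.log_mul (by exact_mod_cast Nat.one_le_iff_ne_zero.mp (hee_pos (n-2))) hlog2.ne']
  have h0 : Tendsto (fun n : ℕ => ((n:ℝ))⁻¹) atTop (nhds 0) :=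
    tendsto_inv_atTop_zero.comp tendsto_natCast_atTop_atTop
  set C := Real.log (Real.log 2) with hC
  set L := Real.log 2 with hL
  -- lower and upper bounds on log log a n
  have lbound : ∀ n : ℕ, 2 ≤ n →
      ((n:ℝ) - 2) * L + C ≤ Real.log (Real.log (a n)) := by
    intro n hn
    rw [loglogan n hn]
    have h1 : (2:ℝ) ^ (n-2) ≤ ((ee (n-2) : ℕ) : ℝ) := by exact_mod_cast ee_lb (n-2)
    have h2 : Real.log ((2:ℝ) ^ (n-2)) ≤ Real.log (ee (n-2)) :=
      Real.log_le_log (by positivity) h1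
    rw [Real.log_pow] at h2
    have hcast : (((n:ℕ) - 2 : ℕ) : ℝ) = (n:ℝ) - 2 := by
      have : (2:ℕ) ≤ n := hn
      push_cast [Nat.cast_sub this]
      ring
    rw [hcast] at h2
    linarith
  have ubound : ∀ n : ℕ, 2 ≤ n →
      Real.log (Real.log (a n)) ≤ ((n:ℝ) - 1) * L + C := by
    intro n hn
    rw [loglogan n hn]
    have h1 : ((ee (n-2) : ℕ) : ℝ) ≤ (2:ℝ) ^ (n-1) := by
      have := ee_ub (n-2)
      rw [show n - 2 + 1 = n - 1 by omega] at this
      exact_mod_cast (by omega : ee (n-2) ≤ 2 ^ (n-1))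
    have h2 : Real.log (ee (n-2)) ≤ Real.log ((2:ℝ) ^ (n-1)) :=
      Real.log_le_log (by exact_mod_cast hee_pos (n-2)) h1
    rw [Real.log_pow] at h2
    have hcast : (((n:ℕ) - 1 : ℕ) : ℝ) = (n:ℝ) - 1 := by
      have : (1:ℕ) ≤ n := by omega
      push_cast [Nat.cast_sub this]
      ring
    rw [hcast] at h2
    linarith
  have part1 : Tendsto (fun n : ℕ => Real.log (Real.log (a n)) / n) atTop (nhds L) := by
    apply tendsto_of_tendsto_of_tendsto_of_le_of_le'
      (g := fun n : ℕ => L + (C - 2 * L) * (n:ℝ)⁻¹)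
      (h := fun n : ℕ => L + (C - L) * (n:ℝ)⁻¹)
    · simpa using tendsto_const_nhds.add (h0.const_mul (C - 2 * L))
    · simpa using tendsto_const_nhds.add (h0.const_mul (C - L))
    · filter_upwards [eventually_ge_atTop 2] with n hn
      have hn0 : (0:ℝ) < n := by exact_mod_cast (by omega : 0 < n)
      have heq : L + (C - 2 * L) * (n:ℝ)⁻¹ = (((n:ℝ) - 2) * L + C) / n := by
        field_simp
        ring
      rw [heq]
      exact div_le_div_of_nonneg_right (lbound n hn) hn0.le
    · filter_upwards [eventually_ge_atTop 2] with n hn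
      have hn0 : (0:ℝ) < n := by exact_mod_cast (by omega : 0 < n)
      have heq : L + (C - L) * (n:ℝ)⁻¹ = (((n:ℝ) - 1) * L + C) / n := by
        field_simp
        ring
      rw [heq]
      exact div_le_div_of_nonneg_right (ubound n hn) hn0.le
  refine ⟨part1, ?_⟩
  -- now the second part
  have hba : ∀ n, 2 ≤ n → b n ≤ a n := by
    intro n hn
    rcases eq_or_lt_of_le hn with h | h
    · rw [← h, ha2, hb2]; norm_num
    · have h3 : 3 ≤ n := h
      rw [hbn n h3, han n (by omega)]
      apply Nat.pow_le_pow_right (by norm_num)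
      have := (ee_double (n-3)).1
      rwa [show n - 3 + 1 = n - 2 by omega] at this
  have ha2le : ∀ n, 2 ≤ n → 2 ≤ a n := by
    intro n hn
    rw [han n hn]
    calc 2 = 2 ^ 1 := rfl
    _ ≤ 2 ^ ee (n-2) := Nat.pow_le_pow_right (by norm_num) (hee_pos (n-2))
  apply tendsto_of_tendsto_of_tendsto_of_le_of_le'
    (g := fun n : ℕ => Real.log (Real.log (a n)) / n)
    (h := fun n : ℕ => Real.log (Real.log (a n)) / n + L * (n:ℝ)⁻¹)
    part1
  · simpa using part1.add (h0.const_mul L)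
  · filter_upwards [eventually_ge_atTop 2] with n hn
    have hn0 : (0:ℝ) < n := by exact_mod_cast (by omega : 0 < n)
    have h1 : (1:ℝ) < (a n : ℝ) := by
      have := ha2le n hn; exact_mod_cast (by omega : 1 < a n)
    have hb0 : (0:ℝ) ≤ (b n : ℝ) := by positivity
    have hle : Real.log (a n) ≤ Real.log ((a n : ℝ) + (b n : ℝ)) :=
      Real.log_le_log (by linarith) (by linarith)
    have h2 : Real.log (Real.log (a n)) ≤ Real.log (Real.log ((a n : ℝ) + (b n : ℝ))) :=
      Real.log_le_log (Real.log_pos h1) hle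
    exact div_le_div_of_nonneg_right h2 hn0.le
  · filter_upwards [eventually_ge_atTop 2] with n hn
    have hn0 : (0:ℝ) < n := by exact_mod_cast (by omega : 0 < n)
    have h1 : (1:ℝ) < (a n : ℝ) := by
      have := ha2le n hn; exact_mod_cast (by omega : 1 < a n)
    have hb0 : (0:ℝ) ≤ (b n : ℝ) := by positivity
    have hN : a n + b n ≤ a n ^ 2 := by
      have h2a := ha2le n hn
      have hba' := hba n hn
      nlinarith
    have hab : (a n : ℝ) + (b n : ℝ) ≤ ((a n : ℝ)) ^ 2 := by exact_mod_cast hN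
    have hlog1 : Real.log ((a n : ℝ) + (b n : ℝ)) ≤ 2 * Real.log (a n) := by
      have := Real.log_le_log (by linarith : (0:ℝ) < (a n : ℝ) + (b n : ℝ)) hab
      rwa [Real.log_pow, Nat.cast_ofNat] at this
    have hlog2' : Real.log (Real.log ((a n : ℝ) + (b n : ℝ)))
        ≤ Real.log (2 * Real.log (a n)) := by
      apply Real.log_le_log
      · exact Real.log_pos (by linarith)
      · exact hlog1
    rw [Real.log_mul two_ne_zero (Real.log_pos h1).ne'] at hlog2'
    calc Real.log (Real.log ((a n : ℝ) + (b n : ℝ))) / n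
        ≤ (Real.log 2 + Real.log (Real.log (a n))) / n :=
          div_le_div_of_nonneg_right hlog2' hn0.le
      _ = Real.log (Real.log (a n)) / n + L * (n:ℝ)⁻¹ := by
          rw [hL, add_div, div_eq_mul_inv, add_comm]
end
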